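/- Let β > 0, let Σ ⊆ ℝ³ be a measurable set of finite positive measure contained in the closed ball of center x₀ and radius R > 0, and let E, B : ℝ³ → ℝ³ be measurable vector fields with ‖E(x)‖ ≤ β, ‖B(x)‖ ≤ β and U(E(x),B(x)) > 0 for all x ∈ Σ, with u_BI(E(·),B(·)) and U^{-1/2}(E × B) integrable on Σ. Fix a unit vector k ∈ ℝ³. If equality holds in the quasi-local inequality, i.e. ∫_Σ u_BI(E(x),B(x)) dx = (1/R) · | ∫_Σ U(E(x),B(x))^{-1/2} ⟨(x − x₀) × (E(x) × B(x)), k⟩ dx |, then E(x) = 0 and B(x) = 0 for almost every x ∈ Σ. -/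

import Mathlib

open MeasureTheory Real Filter
open scoped RealInnerProductSpace

noncomputable section

/-- Three-dimensional Euclidean space. -/
abbrev E3 := EuclideanSpace ℝ (Fin 3)

/-- Cross product on `ℝ³`. -/
def cross3 (a b : E3) : E3 :=
  WithLp.toLp 2 ![a 1 * b 2 - a 2 * b 1, a 2 * b 0 - a 0 * b 2, a 0 * b 1 - a 1 * b 0]

/-- The Born–Infeld function `U(E,B) = 1 + ‖B‖²/β² − ‖E‖²/β² − (E⋅B)²/β⁴`. -/
def Ubi (β : ℝ) (E B : E3) : ℝ :=
  1 + ‖B‖ ^ 2 / β ^ 2 - ‖E‖ ^ 2 / β ^ 2 - ⟪E, B⟫ ^ 2 / β ^ 4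

/-- The Born–Infeld energy density `u_BI(E,B) = (β²/√U)(1 + ‖B‖²/β² − √U)`. -/
def uBI (β : ℝ) (E B : E3) : ℝ :=
  β ^ 2 / Real.sqrt (Ubi β E B) * (1 + ‖B‖ ^ 2 / β ^ 2 - Real.sqrt (Ubi β E B))

lemma inner3 (a b : E3) : ⟪a, b⟫ = a 0 * b 0 + a 1 * b 1 + a 2 * b 2 := by
  simp [PiLp.inner_apply, Fin.sum_univ_three]; ring

lemma normsq3 (a : E3) : ‖a‖ ^ 2 = a 0 ^ 2 + a 1 ^ 2 + a 2 ^ 2 := by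
  rw [← real_inner_self_eq_norm_sq, inner3]; ring

lemma cross3_lagrange (a b : E3) :
    ‖cross3 a b‖ ^ 2 = ‖a‖ ^ 2 * ‖b‖ ^ 2 - ⟪a, b⟫ ^ 2 := by
  rw [normsq3, normsq3, normsq3, inner3]
  simp only [cross3, PiLp.toLp_apply, WithLp.ofLp_toLp, Matrix.cons_val_zero, Matrix.cons_val_one, Matrix.head_cons,
    Matrix.cons_val_two, Matrix.tail_cons]
  ring

lemma cross3_norm_le (a b : E3) : ‖cross3 a b‖ ≤ ‖a‖ * ‖b‖ := by
  have h := cross3_lagrange a b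
  refine le_of_pow_le_pow_left₀ two_ne_zero (by positivity) ?_
  rw [mul_pow] at *
  nlinarith [sq_nonneg (⟪a,b⟫)]

lemma cross3_zero_right (a : E3) : cross3 a 0 = 0 := by
  ext i; fin_cases i <;> simp [cross3]

/-- β⁴ U = (β²−‖E‖²)(β²+‖B‖²) + ‖E×B‖² -/
lemma Ubi_key (β : ℝ) (hβ : 0 < β) (E B : E3) :
    β ^ 4 * Ubi β E B =
      (β ^ 2 - ‖E‖ ^ 2) * (β ^ 2 + ‖B‖ ^ 2) + ‖cross3 E B‖ ^ 2 := by
  have h := cross3_lagrange E B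
  have hβ' : β ≠ 0 := ne_of_gt hβ
  rw [Ubi, h]
  field_simp
  ring

/-- Key pointwise inequality: `‖E×B‖ ≤ √U · uBI`. -/
lemma key_ineq (β : ℝ) (hβ : 0 < β) (E B : E3)
    (hE : ‖E‖ ≤ β) (hB : ‖B‖ ≤ β) (hU : 0 < Ubi β E B) :
    ‖cross3 E B‖ ≤ Real.sqrt (Ubi β E B) * uBI β E B := by
  set s := Real.sqrt (Ubi β E B) with hs
  have hspos : 0 < s := Real.sqrt_pos.mpr hU
  have hs2 : s ^ 2 = Ubi β E B := Real.sq_sqrt hU.le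
  set c := ‖cross3 E B‖ with hc
  have hcnn : 0 ≤ c := norm_nonneg _
  have hkey := Ubi_key β hβ E B
  have hcEB : c ≤ ‖E‖ * ‖B‖ := by
    have h := cross3_lagrange E B
    refine le_of_pow_le_pow_left₀ two_ne_zero (by positivity) ?_
    rw [mul_pow] at *
    nlinarith [sq_nonneg (⟪E,B⟫)]
  have hsu : s * uBI β E B = β ^ 2 + ‖B‖ ^ 2 - β ^ 2 * s := by
    rw [uBI, ← hs]
    field_simp
  rw [hsu]
  have hrhs : 0 ≤ β ^ 2 + ‖B‖ ^ 2 - c := by nlinarith [norm_nonneg E, norm_nonneg B]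
  have hsq : (β ^ 2 * s) ^ 2 ≤ (β ^ 2 + ‖B‖ ^ 2 - c) ^ 2 := by
    have : (β ^ 2 * s) ^ 2 = β ^ 4 * Ubi β E B := by rw [mul_pow, hs2]; ring
    rw [this, hkey]
    nlinarith [sq_nonneg (‖E‖ - ‖B‖), norm_nonneg E, norm_nonneg B, sq_nonneg β]
  have hle : β ^ 2 * s ≤ β ^ 2 + ‖B‖ ^ 2 - c :=
    le_of_pow_le_pow_left₀ two_ne_zero hrhs hsq
  linarith

lemma uBI_nonneg (β : ℝ) (hβ : 0 < β) (E B : E3)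
    (hE : ‖E‖ ≤ β) (hB : ‖B‖ ≤ β) (hU : 0 < Ubi β E B) :
    0 ≤ uBI β E B := by
  have h := key_ineq β hβ E B hE hB hU
  have hspos : 0 < Real.sqrt (Ubi β E B) := Real.sqrt_pos.mpr hU
  nlinarith [norm_nonneg (cross3 E B)]

/-- Rigidity: `uBI = 0` (with vanishing Poynting vector) forces `E = 0` and `B = 0`. -/
lemma uBI_zero_rigid (β : ℝ) (hβ : 0 < β) (E B : E3)
    (hU : 0 < Ubi β E B) (hc : ‖cross3 E B‖ = 0) (hu : uBI β E B = 0) :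
    E = 0 ∧ B = 0 := by
  set s := Real.sqrt (Ubi β E B) with hs
  have hspos : 0 < s := Real.sqrt_pos.mpr hU
  have hs2 : s ^ 2 = Ubi β E B := Real.sq_sqrt hU.le
  have hkey := Ubi_key β hβ E B
  rw [hc] at hkey
  have hsu : s * uBI β E B = β ^ 2 + ‖B‖ ^ 2 - β ^ 2 * s := by
    rw [uBI, ← hs]
    field_simp
  rw [hu, mul_zero] at hsu
  have hbs : β ^ 2 * s = β ^ 2 + ‖B‖ ^ 2 := by linarith
  have h1 : (β ^ 2 + ‖B‖ ^ 2) ^ 2 = (β ^ 2 - ‖E‖ ^ 2) * (β ^ 2 + ‖B‖ ^ 2) := by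
    have h2 : (β ^ 2 * s) ^ 2 = β ^ 4 * Ubi β E B := by rw [mul_pow, hs2]; ring
    linear_combination h2 + hkey - (β ^ 2 * s + β ^ 2 + ‖B‖ ^ 2) * hbs
  have hpos : (0:ℝ) < β ^ 2 + ‖B‖ ^ 2 := by positivity
  have h3 : (β ^ 2 + ‖B‖ ^ 2) * (‖E‖ ^ 2 + ‖B‖ ^ 2) = 0 := by linear_combination h1
  have hEB : ‖E‖ ^ 2 + ‖B‖ ^ 2 = 0 := (mul_eq_zero.mp h3).resolve_left hpos.ne'
  have hE0 : ‖E‖ ^ 2 = 0 := by nlinarith [sq_nonneg ‖B‖]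
  have hB0 : ‖B‖ ^ 2 = 0 := by nlinarith [sq_nonneg ‖E‖]
  exact ⟨norm_eq_zero.mp (by nlinarith [norm_nonneg E]),
    norm_eq_zero.mp (by nlinarith [norm_nonneg B])⟩

lemma continuous_cross3 : Continuous fun p : E3 × E3 => cross3 p.1 p.2 := by
  unfold cross3
  have h : ∀ i : Fin 3, Continuous fun p : E3 × E3 => p.1 i :=
    fun i => ((EuclideanSpace.proj i : E3 →L[ℝ] ℝ).continuous).comp continuous_fst
  have h2 : ∀ i : Fin 3, Continuous fun p : E3 × E3 => p.2 i :=
    fun i => ((EuclideanSpace.proj i : E3 →L[ℝ] ℝ).continuous).comp continuous_snd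
  refine (PiLp.continuous_toLp 2 _).comp ?_
  apply continuous_pi
  intro i
  fin_cases i <;> simp <;> fun_prop

/-- Pointwise rigidity at a point strictly inside the ball. -/
lemma pointwise_rigid (β : ℝ) (hβ : 0 < β) (R : ℝ) (hR : 0 < R)
    (v Ev Bv k : E3) (hk : ‖k‖ = 1)
    (hE : ‖Ev‖ ≤ β) (hB : ‖Bv‖ ≤ β) (hU : 0 < Ubi β Ev Bv) (hv : ‖v‖ < R)
    (heq : R * uBI β Ev Bv =
      |(Real.sqrt (Ubi β Ev Bv))⁻¹ * ⟪cross3 v (cross3 Ev Bv), k⟫|) :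
    Ev = 0 ∧ Bv = 0 := by
  set s := Real.sqrt (Ubi β Ev Bv) with hs
  have hspos : 0 < s := Real.sqrt_pos.mpr hU
  by_cases hc : cross3 Ev Bv = 0
  · have h0 : ⟪cross3 v (cross3 Ev Bv), k⟫ = 0 := by
      rw [hc, cross3_zero_right, inner_zero_left]
    rw [h0, mul_zero, abs_zero] at heq
    have hu0 : uBI β Ev Bv = 0 := by
      have := mul_eq_zero.mp heq
      rcases this with h | h
      · exact absurd h hR.ne'
      · exact h
    exact uBI_zero_rigid β hβ Ev Bv hU (norm_eq_zero.mpr hc) hu0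
  · exfalso
    have hcpos : 0 < ‖cross3 Ev Bv‖ := norm_pos_iff.mpr hc
    have h1 : |⟪cross3 v (cross3 Ev Bv), k⟫| ≤ ‖v‖ * ‖cross3 Ev Bv‖ := by
      calc |⟪cross3 v (cross3 Ev Bv), k⟫|
          ≤ ‖cross3 v (cross3 Ev Bv)‖ * ‖k‖ := abs_real_inner_le_norm _ _
        _ = ‖cross3 v (cross3 Ev Bv)‖ := by rw [hk, mul_one]
        _ ≤ ‖v‖ * ‖cross3 Ev Bv‖ := cross3_norm_le _ _
    have hkey : ‖cross3 Ev Bv‖ ≤ s * uBI β Ev Bv := key_ineq β hβ Ev Bv hE hB hU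
    have hsinv : 0 < s⁻¹ := inv_pos.mpr hspos
    have hchain : |s⁻¹ * ⟪cross3 v (cross3 Ev Bv), k⟫| < R * uBI β Ev Bv := by
      calc |s⁻¹ * ⟪cross3 v (cross3 Ev Bv), k⟫|
          = s⁻¹ * |⟪cross3 v (cross3 Ev Bv), k⟫| := by
            rw [abs_mul, abs_of_nonneg hsinv.le]
        _ ≤ s⁻¹ * (‖v‖ * ‖cross3 Ev Bv‖) := mul_le_mul_of_nonneg_left h1 hsinv.le
        _ < s⁻¹ * (R * ‖cross3 Ev Bv‖) := by
            exact mul_lt_mul_of_pos_left (mul_lt_mul_of_pos_right hv hcpos) hsinv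
        _ = R * (s⁻¹ * ‖cross3 Ev Bv‖) := by ring
        _ ≤ R * uBI β Ev Bv := by
            refine mul_le_mul_of_nonneg_left ?_ hR.le
            rw [inv_mul_le_iff₀ hspos]
            exact hkey
    rw [← heq] at hchain
    exact lt_irrefl _ hchain

/-- **Rigidity in the quasi-local energy–angular momentum inequality for Born–Infeld.**
If the region `S` has finite positive measure and equality holds between the
Born–Infeld energy of `S` and `(1/R)` times the absolute value of its angular momentum
about `x₀` along the unit axis `k`, then the fields `E` and `B` vanish almost
everywhere on `S`. -/
theorem bornInfeld_quasilocal_equality_rigidity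
    (β : ℝ) (hβ : 0 < β)
    (S : Set E3) (hSm : MeasurableSet S)
    (hSpos : 0 < volume S) (hSfin : volume S < ⊤)
    (x₀ : E3) (R : ℝ) (hR : 0 < R) (hball : S ⊆ Metric.closedBall x₀ R)
    (E B : E3 → E3) (hEm : Measurable E) (hBm : Measurable B)
    (hEle : ∀ x ∈ S, ‖E x‖ ≤ β) (hBle : ∀ x ∈ S, ‖B x‖ ≤ β)
    (hU : ∀ x ∈ S, 0 < Ubi β (E x) (B x))
    (hu_int : IntegrableOn (fun x => uBI β (E x) (B x)) S)
    (hJ_int : IntegrableOn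
      (fun x => (Real.sqrt (Ubi β (E x) (B x)))⁻¹ • cross3 (E x) (B x)) S)
    (k : E3) (hk : ‖k‖ = 1)
    (heq : ∫ x in S, uBI β (E x) (B x) =
      (1 / R) * |∫ x in S, (Real.sqrt (Ubi β (E x) (B x)))⁻¹ *
        ⟪cross3 (x - x₀) (cross3 (E x) (B x)), k⟫|) :
    ∀ᵐ x ∂(volume.restrict S), E x = 0 ∧ B x = 0 := by
  set g : E3 → ℝ := fun x => (Real.sqrt (Ubi β (E x) (B x)))⁻¹ *
    ⟪cross3 (x - x₀) (cross3 (E x) (B x)), k⟫ with hgdef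
  set f : E3 → ℝ := fun x => uBI β (E x) (B x) with hfdef
  -- measurability of g
  have hUm : Measurable fun x => Ubi β (E x) (B x) := by
    unfold Ubi
    have h1 : Measurable fun x => ‖B x‖ := hBm.norm
    have h2 : Measurable fun x => ‖E x‖ := hEm.norm
    have h3 : Measurable fun x => (⟪E x, B x⟫ : ℝ) := hEm.inner hBm
    fun_prop
  have hsm : Measurable fun x => (Real.sqrt (Ubi β (E x) (B x)))⁻¹ :=
    (Real.continuous_sqrt.measurable.comp hUm).inv
  have hcm : Measurable fun x => cross3 (E x) (B x) :=
    continuous_cross3.measurable.comp (hEm.prodMk hBm)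
  have hxm : Measurable fun x : E3 => cross3 (x - x₀) (cross3 (E x) (B x)) :=
    continuous_cross3.measurable.comp
      ((measurable_id.sub measurable_const).prodMk hcm)
  have hgm : Measurable g := hsm.mul (hxm.inner measurable_const)
  -- pointwise bound
  have hbound : ∀ x ∈ S, |g x| ≤ R * f x := by
    intro x hx
    have hU' := hU x hx
    set s := Real.sqrt (Ubi β (E x) (B x)) with hs
    have hspos : 0 < s := Real.sqrt_pos.mpr hU'
    have hsinv : 0 < s⁻¹ := inv_pos.mpr hspos
    have h1 : |⟪cross3 (x - x₀) (cross3 (E x) (B x)), k⟫| ≤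
        ‖x - x₀‖ * ‖cross3 (E x) (B x)‖ := by
      calc |⟪cross3 (x - x₀) (cross3 (E x) (B x)), k⟫|
          ≤ ‖cross3 (x - x₀) (cross3 (E x) (B x))‖ * ‖k‖ := abs_real_inner_le_norm _ _
        _ = ‖cross3 (x - x₀) (cross3 (E x) (B x))‖ := by rw [hk, mul_one]
        _ ≤ ‖x - x₀‖ * ‖cross3 (E x) (B x)‖ := cross3_norm_le _ _
    have hkey : ‖cross3 (E x) (B x)‖ ≤ s * f x :=
      key_ineq β hβ (E x) (B x) (hEle x hx) (hBle x hx) hU'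
    have hxR : ‖x - x₀‖ ≤ R := by
      have := hball hx
      rwa [Metric.mem_closedBall, dist_eq_norm] at this
    calc |g x| = s⁻¹ * |⟪cross3 (x - x₀) (cross3 (E x) (B x)), k⟫| := by
          rw [hgdef]; rw [abs_mul, abs_of_nonneg hsinv.le]
      _ ≤ s⁻¹ * (‖x - x₀‖ * ‖cross3 (E x) (B x)‖) :=
          mul_le_mul_of_nonneg_left h1 hsinv.le
      _ ≤ s⁻¹ * (R * (s * f x)) := by
          refine mul_le_mul_of_nonneg_left ?_ hsinv.le
          exact mul_le_mul hxR hkey (norm_nonneg _) hR.le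
      _ = R * f x := by field_simp
  -- integrability of g
  have hg_int : IntegrableOn g S := by
    refine Integrable.mono' (hu_int.const_mul R) hgm.aestronglyMeasurable.restrict ?_
    filter_upwards [ae_restrict_mem hSm] with x hx
    rw [Real.norm_eq_abs]
    exact hbound x hx
  -- integral comparison
  have habs : |∫ x in S, g x| ≤ ∫ x in S, |g x| := by
    simpa [Real.norm_eq_abs] using
      norm_integral_le_integral_norm (μ := volume.restrict S) g
  have hmono : ∫ x in S, |g x| ≤ ∫ x in S, R * f x :=
    setIntegral_mono_on hg_int.abs (hu_int.const_mul R) hSm (fun x hx => hbound x hx)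
  have hRint : ∫ x in S, R * f x = R * ∫ x in S, f x := integral_const_mul R f
  have hAeq : |∫ x in S, g x| = R * ∫ x in S, f x := by
    have : R * ∫ x in S, f x = |∫ x in S, g x| := by
      rw [heq]; field_simp
    linarith
  have hgabs_eq : ∫ x in S, |g x| = R * ∫ x in S, f x := by
    have hle : ∫ x in S, |g x| ≤ R * ∫ x in S, f x := by rw [← hRint]; exact hmono
    linarith [hAeq ▸ habs]
  -- zero integral of the nonnegative function R f − |g|
  have hzero : ∫ x in S, (R * f x - |g x|) = 0 := by
    rw [integral_sub (hu_int.const_mul R) hg_int.abs, hRint, hgabs_eq]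
    ring
  have hnonneg : 0 ≤ᵐ[volume.restrict S] fun x => R * f x - |g x| := by
    filter_upwards [ae_restrict_mem hSm] with x hx
    have := hbound x hx
    simp only [Pi.zero_apply]
    linarith
  have hae0 : (fun x => R * f x - |g x|) =ᵐ[volume.restrict S] 0 :=
    (integral_eq_zero_iff_of_nonneg_ae hnonneg
      ((hu_int.const_mul R).sub hg_int.abs)).mp hzero
  -- the sphere has measure zero
  have hsph : ∀ᵐ x ∂(volume.restrict S), x ∉ Metric.sphere x₀ R := by
    refine ae_restrict_of_ae ?_
    have : volume (Metric.sphere x₀ R) = 0 := Measure.addHaar_sphere volume x₀ R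
    exact measure_eq_zero_iff_ae_notMem.mp this
  filter_upwards [hae0, ae_restrict_mem hSm, hsph] with x h1 h2 h3
  have heqx : R * f x = |g x| := by
    have := h1
    simp only [Pi.zero_apply] at this
    linarith [sub_eq_zero.mp this]
  have hlt : ‖x - x₀‖ < R := by
    have hle : ‖x - x₀‖ ≤ R := by
      have := hball h2
      rwa [Metric.mem_closedBall, dist_eq_norm] at this
    have hne : ‖x - x₀‖ ≠ R := by
      intro h
      exact h3 (by rwa [Metric.mem_sphere, dist_eq_norm])
    exact lt_of_le_of_ne hle hne
  exact pointwise_rigid β hβ R hR (x - x₀) (E x) (B x) k hk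
    (hEle x h2) (hBle x h2) (hU x h2) hlt heqx

end
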